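/- Let F be the multilinear extension of a k-submodular function f, and let e_{i,j} denote the one-hot vector with 1 at coordinate (i,j). Then for any i₁ ≠ i₂ in [n] and any j₁, j₂ ∈ [k], F is convex along any line of direction e_{i₁,j₁} − e_{i₂,j₂}: the function t ↦ F(x + t(e_{i₁,j₁} − e_{i₂,j₂})) is convex on the interval where the argument stays in the polytope P. -/

import Mathlib

open Finset

def kmeet {V : Type*} {k : ℕ} (S T : V → Option (Fin k)) : V → Option (Fin k) :=
  fun e => if S e = T e then S e else none

def kjoin {V : Type*} {k : ℕ} (S T : V → Option (Fin k)) : V → Option (Fin k) :=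
  fun e => match S e, T e with
  | none, t => t
  | some i, none => some i
  | some i, some j => if i = j then some i else none

def KSubmodular {V : Type*} {k : ℕ} (f : (V → Option (Fin k)) → ℝ) : Prop :=
  ∀ S T, f (kmeet S T) + f (kjoin S T) ≤ f S + f T

/-- The multilinear extension of a `k`-submodular function on ground set `Fin n`. -/
def mlext {n k : ℕ} (f : (Fin n → Option (Fin k)) → ℝ) (x : Fin n → Fin k → ℝ) : ℝ :=
  ∑ S : Fin n → Option (Fin k), f S *
    ∏ i, (S i).elim (1 - ∑ j, x i j) (fun j => x i j)

/-- Update the coordinate `(i,j)` of `x` to the value `t`. -/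
def upd {n k : ℕ} (x : Fin n → Fin k → ℝ) (i : Fin n) (j : Fin k) (t : ℝ) :
    Fin n → Fin k → ℝ :=
  fun i' j' => if i' = i ∧ j' = j then t else x i' j'

/-- The partial derivative `∂F/∂x_{i,j}` of the multilinear extension at `x`. -/
noncomputable def pderivF {n k : ℕ} (f : (Fin n → Option (Fin k)) → ℝ)
    (i : Fin n) (j : Fin k) (x : Fin n → Fin k → ℝ) : ℝ :=
  deriv (fun t => mlext f (upd x i j t)) (x i j)

/-- Membership in the polytope `P = {x ∈ [0,1]^{n×k} : ∑_j x_{i,j} ≤ 1 ∀ i}`. -/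
def inP {n k : ℕ} (x : Fin n → Fin k → ℝ) : Prop :=
  (∀ i j, 0 ≤ x i j ∧ x i j ≤ 1) ∧ ∀ i, ∑ j, x i j ≤ 1

/-- The one-hot vector with value `1` at coordinate `(i,j)`. -/
def onehot {n k : ℕ} (i : Fin n) (j : Fin k) : Fin n → Fin k → ℝ :=
  fun i' j' => if i' = i ∧ j' = j then 1 else 0

section AuxKSub

variable {n k : ℕ}

/-- The weight of row `i` given the option value `a`. -/
def wgtKS (x : Fin n → Fin k → ℝ) (i : Fin n) (a : Option (Fin k)) : ℝ :=
  a.elim (1 - ∑ j, x i j) (fun j => x i j)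

lemma mlext_eq_wgtKS (f : (Fin n → Option (Fin k)) → ℝ) (x : Fin n → Fin k → ℝ) :
    mlext f x = ∑ S : Fin n → Option (Fin k), f S * ∏ i, wgtKS x i (S i) := rfl

/-- slope of row `i₁` factor in direction `+e_{i₁,j₁}`. -/
def sl1KS (j₁ : Fin k) (a : Option (Fin k)) : ℝ :=
  a.elim (-1) (fun j => if j = j₁ then 1 else 0)

/-- slope of row `i₂` factor in direction `-e_{i₂,j₂}`. -/
def sl2KS (j₂ : Fin k) (b : Option (Fin k)) : ℝ :=
  b.elim 1 (fun j => if j = j₂ then -1 else 0)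

/-- the product of the weights of all rows other than `i₁, i₂`. -/
def restKS (x : Fin n → Fin k → ℝ) (i₁ i₂ : Fin n) (S : Fin n → Option (Fin k)) : ℝ :=
  ∏ i ∈ (Finset.univ.erase i₁).erase i₂, wgtKS x i (S i)

lemma mlext_quadratic (f : (Fin n → Option (Fin k)) → ℝ)
    (i₁ i₂ : Fin n) (hi : i₁ ≠ i₂) (j₁ j₂ : Fin k) (x : Fin n → Fin k → ℝ) (t : ℝ) :
    mlext f (fun i j => x i j + t * (onehot i₁ j₁ i j - onehot i₂ j₂ i j)) =
      (∑ S : Fin n → Option (Fin k),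
        f S * (sl1KS j₁ (S i₁) * sl2KS j₂ (S i₂) * restKS x i₁ i₂ S)) * t ^ 2 +
      (∑ S : Fin n → Option (Fin k),
        f S * ((wgtKS x i₁ (S i₁) * sl2KS j₂ (S i₂) + wgtKS x i₂ (S i₂) * sl1KS j₁ (S i₁)) *
          restKS x i₁ i₂ S)) * t +
      (∑ S : Fin n → Option (Fin k),
        f S * (wgtKS x i₁ (S i₁) * wgtKS x i₂ (S i₂) * restKS x i₁ i₂ S)) := by
  have hprod : ∀ S : Fin n → Option (Fin k),
      (∏ i, wgtKS (fun i j => x i j + t * (onehot i₁ j₁ i j - onehot i₂ j₂ i j)) i (S i)) =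
      (wgtKS x i₁ (S i₁) + t * sl1KS j₁ (S i₁)) *
        ((wgtKS x i₂ (S i₂) + t * sl2KS j₂ (S i₂)) * restKS x i₁ i₂ S) := by
    intro S
    rw [← Finset.mul_prod_erase Finset.univ _ (Finset.mem_univ i₁),
        ← Finset.mul_prod_erase _ _
          (Finset.mem_erase.mpr ⟨Ne.symm hi, Finset.mem_univ i₂⟩)]
    congr 1
    · -- row i₁ factor
      cases h : S i₁ with
      | none =>
        simp [wgtKS, sl1KS, onehot, hi, Finset.sum_add_distrib, mul_ite, mul_one, mul_zero,
          Finset.sum_ite_eq', Finset.mul_sum]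
        ring
      | some j =>
        simp [wgtKS, sl1KS, onehot, hi]
    congr 1
    · -- row i₂ factor
      cases h : S i₂ with
      | none =>
        simp [wgtKS, sl2KS, onehot, Ne.symm hi, Finset.sum_add_distrib, mul_ite, mul_one,
          mul_zero, Finset.sum_ite_eq', Finset.mul_sum]
        ring
      | some j =>
        by_cases hj : j = j₂ <;>
          simp [wgtKS, sl2KS, onehot, Ne.symm hi, hj]
    · -- remaining rows
      refine Finset.prod_congr rfl fun i hmem => ?_
      have h2 : i ≠ i₂ := (Finset.mem_erase.mp hmem).1
      have h1 : i ≠ i₁ := (Finset.mem_erase.mp (Finset.mem_erase.mp hmem).2).1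
      cases h : S i with
      | none => simp [wgtKS, onehot, h1, h2]
      | some j => simp [wgtKS, onehot, h1, h2]
  rw [mlext_eq_wgtKS]
  calc (∑ S : Fin n → Option (Fin k),
          f S * ∏ i, wgtKS (fun i j => x i j + t * (onehot i₁ j₁ i j - onehot i₂ j₂ i j)) i (S i))
      = ∑ S : Fin n → Option (Fin k),
          (f S * (sl1KS j₁ (S i₁) * sl2KS j₂ (S i₂) * restKS x i₁ i₂ S) * t ^ 2 +
           (f S * ((wgtKS x i₁ (S i₁) * sl2KS j₂ (S i₂) + wgtKS x i₂ (S i₂) * sl1KS j₁ (S i₁)) *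
              restKS x i₁ i₂ S) * t +
            f S * (wgtKS x i₁ (S i₁) * wgtKS x i₂ (S i₂) * restKS x i₁ i₂ S))) := by
        refine Finset.sum_congr rfl fun S _ => ?_
        rw [hprod S]; ring
    _ = _ := by
        rw [Finset.sum_add_distrib, Finset.sum_add_distrib, ← Finset.sum_mul, ← Finset.sum_mul]
        ring

end AuxKSub
section AuxKSub2

variable {n k : ℕ}

/-- Splitting a labelling `S` into its values at `i₁, i₂` and the rest. -/
def splitKS (i₁ i₂ : Fin n) (hi : i₁ ≠ i₂) :
    ((Option (Fin k) × Option (Fin k)) ×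
      {T : Fin n → Option (Fin k) // T i₁ = none ∧ T i₂ = none}) ≃
    (Fin n → Option (Fin k)) where
  toFun p := Function.update (Function.update p.2.1 i₁ p.1.1) i₂ p.1.2
  invFun S := ((S i₁, S i₂),
    ⟨Function.update (Function.update S i₁ none) i₂ none,
      by constructor <;> simp [Function.update_apply, hi]⟩)
  left_inv := by
    rintro ⟨⟨a, b⟩, ⟨T, hT1, hT2⟩⟩
    refine Prod.ext (Prod.ext ?_ ?_) (Subtype.ext ?_)
    · simp [Function.update_apply, hi]
    · simp [Function.update_apply]
    · funext e
      by_cases h2 : e = i₂ <;> by_cases h1 : e = i₁ <;>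
        simp [Function.update_apply, h1, h2, hT1, hT2]
  right_inv := by
    intro S
    funext e
    by_cases h2 : e = i₂ <;> by_cases h1 : e = i₁ <;>
      simp [Function.update_apply, h1, h2] <;>
      (intro h; simp [h])

lemma qC_nonneg (f : (Fin n → Option (Fin k)) → ℝ) (hf : KSubmodular f)
    (i₁ i₂ : Fin n) (hi : i₁ ≠ i₂) (j₁ j₂ : Fin k) (x : Fin n → Fin k → ℝ)
    (hP : ∀ S, 0 ≤ restKS x i₁ i₂ S) :
    0 ≤ ∑ S : Fin n → Option (Fin k),
        f S * (sl1KS j₁ (S i₁) * sl2KS j₂ (S i₂) * restKS x i₁ i₂ S) := by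
  rw [← Equiv.sum_comp (splitKS i₁ i₂ hi)
    (fun S => f S * (sl1KS j₁ (S i₁) * sl2KS j₂ (S i₂) * restKS x i₁ i₂ S))]
  rw [Fintype.sum_prod_type, Finset.sum_comm]
  refine Finset.sum_nonneg fun Tp _ => ?_
  obtain ⟨T, hT1, hT2⟩ := Tp
  set U : Option (Fin k) → Option (Fin k) → (Fin n → Option (Fin k)) :=
    fun a b => Function.update (Function.update T i₁ a) i₂ b with hU
  have hUi₁ : ∀ a b, U a b i₁ = a := by
    intro a b; simp [hU, Function.update_apply, hi]
  have hUi₂ : ∀ a b, U a b i₂ = b := by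
    intro a b; simp [hU, Function.update_apply]
  have hUrest : ∀ a b, restKS x i₁ i₂ (U a b) = restKS x i₁ i₂ T := by
    intro a b
    refine Finset.prod_congr rfl fun i hmem => ?_
    have h2 : i ≠ i₂ := (Finset.mem_erase.mp hmem).1
    have h1 : i ≠ i₁ := (Finset.mem_erase.mp (Finset.mem_erase.mp hmem).2).1
    simp [hU, Function.update_apply, h1, h2]
  have hstep : ∀ ab : Option (Fin k) × Option (Fin k),
      f (splitKS i₁ i₂ hi (ab, ⟨T, hT1, hT2⟩)) *
        (sl1KS j₁ ((splitKS i₁ i₂ hi (ab, ⟨T, hT1, hT2⟩)) i₁) *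
          sl2KS j₂ ((splitKS i₁ i₂ hi (ab, ⟨T, hT1, hT2⟩)) i₂) *
          restKS x i₁ i₂ (splitKS i₁ i₂ hi (ab, ⟨T, hT1, hT2⟩))) =
      f (U ab.1 ab.2) * (sl1KS j₁ ab.1 * sl2KS j₂ ab.2 * restKS x i₁ i₂ T) := by
    intro ab
    have : splitKS i₁ i₂ hi (ab, ⟨T, hT1, hT2⟩) = U ab.1 ab.2 := rfl
    rw [this, hUi₁, hUi₂, hUrest]
  calc (0:ℝ) ≤ restKS x i₁ i₂ T *
      ((f (U (some j₁) none) + f (U none (some j₂))) -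
        (f (U (some j₁) (some j₂)) + f (U none none))) := by
        have hU00 : U none none = T := by
          funext e
          by_cases h2 : e = i₂ <;> by_cases h1 : e = i₁ <;>
            simp [hU, Function.update_apply, h1, h2, hT1, hT2, hi]
        have hU10 : U (some j₁) none = Function.update T i₁ (some j₁) := by
          funext e
          by_cases h2 : e = i₂ <;> by_cases h1 : e = i₁ <;>
            simp [hU, Function.update_apply, h1, h2, hT1, hT2, hi, Ne.symm hi]
        have hU01 : U none (some j₂) = Function.update T i₂ (some j₂) := by
          funext e
          by_cases h2 : e = i₂ <;> by_cases h1 : e = i₁ <;>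
            simp [hU, Function.update_apply, h1, h2, hT1, hT2, hi, Ne.symm hi]
        have hm : kmeet (Function.update T i₁ (some j₁))
            (Function.update T i₂ (some j₂)) = T := by
          funext e
          by_cases h1 : e = i₁
          · have h2 : e ≠ i₂ := by rw [h1]; exact hi
            have hA : Function.update T i₁ (some j₁) e = some j₁ := by
              simp [Function.update_apply, h1, hi, Ne.symm hi]
            have hB : Function.update T i₂ (some j₂) e = none := by
              simp [Function.update_apply, h1, h2, hT1, hi, Ne.symm hi]
            simp [kmeet, hA, hB, h1, hT1, Function.update_apply, hi, Ne.symm hi]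
          · by_cases h2 : e = i₂
            · have hA : Function.update T i₁ (some j₁) e = none := by
                simp [Function.update_apply, h1, h2, hT2, hi, Ne.symm hi]
              have hB : Function.update T i₂ (some j₂) e = some j₂ := by
                simp [Function.update_apply, h2, hi, Ne.symm hi]
              simp [kmeet, hA, hB, h2, hT2, Function.update_apply, hi, Ne.symm hi]
            · have hA : Function.update T i₁ (some j₁) e = T e := by
                simp [Function.update_apply, h1, hi, Ne.symm hi]
              have hB : Function.update T i₂ (some j₂) e = T e := by
                simp [Function.update_apply, h2, hi, Ne.symm hi]
              simp [kmeet, hA, hB]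
        have hjn : kjoin (Function.update T i₁ (some j₁))
            (Function.update T i₂ (some j₂)) = U (some j₁) (some j₂) := by
          funext e
          by_cases h1 : e = i₁
          · have h2 : e ≠ i₂ := by rw [h1]; exact hi
            have hA : Function.update T i₁ (some j₁) e = some j₁ := by
              simp [Function.update_apply, h1, hi, Ne.symm hi]
            have hB : Function.update T i₂ (some j₂) e = none := by
              simp [Function.update_apply, h1, h2, hT1, hi, Ne.symm hi]
            have hUe : U (some j₁) (some j₂) e = some j₁ := by
              simp [hU, Function.update_apply, h1, h2, hi, Ne.symm hi]
            rw [hUe]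
            simp [kjoin, hA, hB]
          · by_cases h2 : e = i₂
            · have hA : Function.update T i₁ (some j₁) e = none := by
                simp [Function.update_apply, h1, h2, hT2, hi, Ne.symm hi]
              have hB : Function.update T i₂ (some j₂) e = some j₂ := by
                simp [Function.update_apply, h2, hi, Ne.symm hi]
              have hUe : U (some j₁) (some j₂) e = some j₂ := by
                simp [hU, Function.update_apply, h2, hi, Ne.symm hi]
              rw [hUe]
              simp [kjoin, hA, hB]
            · have hA : Function.update T i₁ (some j₁) e = T e := by
                simp [Function.update_apply, h1, hi, Ne.symm hi]
              have hB : Function.update T i₂ (some j₂) e = T e := by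
                simp [Function.update_apply, h2, hi, Ne.symm hi]
              have hUe : U (some j₁) (some j₂) e = T e := by
                simp [hU, Function.update_apply, h1, h2, hi, Ne.symm hi]
              rw [hUe]
              cases hTe : T e with
              | none => simp [kjoin, hA, hB, hTe]
              | some v => simp [kjoin, hA, hB, hTe]
        have hsub := hf (Function.update T i₁ (some j₁)) (Function.update T i₂ (some j₂))
        rw [hm, hjn] at hsub
        rw [hU00, hU10, hU01]
        exact mul_nonneg (hP T) (by linarith)
    _ = ∑ ab : Option (Fin k) × Option (Fin k),
          f (U ab.1 ab.2) * (sl1KS j₁ ab.1 * sl2KS j₂ ab.2 * restKS x i₁ i₂ T) := by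
        rw [Fintype.sum_prod_type]
        have inner : ∀ a : Option (Fin k),
            (∑ b : Option (Fin k),
              f (U a b) * (sl1KS j₁ a * sl2KS j₂ b * restKS x i₁ i₂ T)) =
            sl1KS j₁ a * restKS x i₁ i₂ T * (f (U a none) - f (U a (some j₂))) := by
          intro a
          rw [Fintype.sum_option, Finset.sum_eq_single_of_mem j₂ (Finset.mem_univ _)
            (fun j _ hj => by simp [sl2KS, hj])]
          simp [sl2KS]
          ring
        simp only [inner]
        rw [Fintype.sum_option, Finset.sum_eq_single_of_mem j₁ (Finset.mem_univ _)
          (fun j _ hj => by simp [sl1KS, hj])]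
        simp [sl1KS]
        ring
    _ = ∑ ab : Option (Fin k) × Option (Fin k),
          f (splitKS i₁ i₂ hi (ab, ⟨T, hT1, hT2⟩)) *
            (sl1KS j₁ ((splitKS i₁ i₂ hi (ab, ⟨T, hT1, hT2⟩)) i₁) *
              sl2KS j₂ ((splitKS i₁ i₂ hi (ab, ⟨T, hT1, hT2⟩)) i₂) *
              restKS x i₁ i₂ (splitKS i₁ i₂ hi (ab, ⟨T, hT1, hT2⟩))) := by
        exact (Finset.sum_congr rfl fun ab _ => hstep ab).symm

end AuxKSub2
theorem mlext_convex_along_swap_directions {n k : ℕ}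
    (f : (Fin n → Option (Fin k)) → ℝ) (hf : KSubmodular f)
    (i₁ i₂ : Fin n) (hi : i₁ ≠ i₂) (j₁ j₂ : Fin k) (x : Fin n → Fin k → ℝ) :
    ConvexOn ℝ
      {t : ℝ | inP (fun i j => x i j + t * (onehot i₁ j₁ i j - onehot i₂ j₂ i j))}
      (fun t : ℝ =>
        mlext f (fun i j => x i j + t * (onehot i₁ j₁ i j - onehot i₂ j₂ i j))) := by
  have hkey : ∀ (a b t₁ t₂ : ℝ), a + b = 1 → ∀ (i : Fin n) (j : Fin k),
      x i j + (a * t₁ + b * t₂) * (onehot i₁ j₁ i j - onehot i₂ j₂ i j)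
        = a * (x i j + t₁ * (onehot i₁ j₁ i j - onehot i₂ j₂ i j))
          + b * (x i j + t₂ * (onehot i₁ j₁ i j - onehot i₂ j₂ i j)) := by
    intro a b t₁ t₂ hab i j
    linear_combination (-(x i j)) * hab
  constructor
  · -- convexity of the parameter set
    intro t₁ ht₁ t₂ ht₂ a b ha hb hab
    simp only [Set.mem_setOf_eq] at ht₁ ht₂ ⊢
    simp only [smul_eq_mul]
    constructor
    · intro i j
      simp only [hkey a b t₁ t₂ hab i j]
      have hy1 := ht₁.1 i j
      have hy2 := ht₂.1 i j
      simp only at hy1 hy2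
      constructor
      · exact add_nonneg (mul_nonneg ha hy1.1) (mul_nonneg hb hy2.1)
      · nlinarith [mul_le_mul_of_nonneg_left hy1.2 ha,
          mul_le_mul_of_nonneg_left hy2.2 hb]
    · intro i
      simp only [hkey a b t₁ t₂ hab]
      rw [Finset.sum_add_distrib, ← Finset.mul_sum, ← Finset.mul_sum]
      have hs1 := ht₁.2 i
      have hs2 := ht₂.2 i
      simp only at hs1 hs2
      nlinarith [mul_le_mul_of_nonneg_left hs1 ha,
        mul_le_mul_of_nonneg_left hs2 hb]
  · -- the convexity inequality along the line
    intro t₁ ht₁ t₂ ht₂ a b ha hb hab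
    simp only [Set.mem_setOf_eq] at ht₁ ht₂
    simp only [smul_eq_mul]
    have hP : ∀ S, 0 ≤ restKS x i₁ i₂ S := by
      intro S
      refine Finset.prod_nonneg fun i hmem => ?_
      have h2 : i ≠ i₂ := (Finset.mem_erase.mp hmem).1
      have h1 : i ≠ i₁ := (Finset.mem_erase.mp (Finset.mem_erase.mp hmem).2).1
      cases hSi : S i with
      | some j =>
        have h0 := (ht₁.1 i j).1
        simp [onehot, h1, h2] at h0
        simpa [wgtKS] using h0
      | none =>
        have h0 := ht₁.2 i
        simp [onehot, h1, h2] at h0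
        simp only [wgtKS, Option.elim]
        linarith
    have hqC := qC_nonneg f hf i₁ i₂ hi j₁ j₂ x hP
    have hq := mlext_quadratic f i₁ i₂ hi j₁ j₂ x
    rw [hq (a * t₁ + b * t₂), hq t₁, hq t₂]
    have hb' : b = 1 - a := by linarith
    subst hb'
    nlinarith [mul_nonneg (mul_nonneg (mul_nonneg ha
      (by linarith : (0:ℝ) ≤ 1 - a)) hqC) (sq_nonneg (t₁ - t₂))]
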